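/- In the equality case of Hoffman's ratio bound, the characteristic vector of the coclique Y lies in the sum of the span of the all-ones vector and the eigenspace of the smallest eigenvalue λ. -/

import Mathlib

open Matrix SimpleGraph Finset

/-- Equality case of Hoffman's ratio bound: the characteristic vector of the coclique lies
in the span of the all-ones vector plus the eigenspace of the smallest eigenvalue. -/
theorem stmt_5 {V : Type*} [Fintype V] [DecidableEq V]
    (G : SimpleGraph V) [DecidableRel G.Adj]
    (k : ℕ) (hreg : G.IsRegularOfDegree k) (lam : ℝ) (hneg : lam < 0)
    (hlam_eig : ∃ v : V → ℝ, v ≠ 0 ∧ (G.adjMatrix ℝ).mulVec v = lam • v)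
    (hlam_min : ∀ (μ : ℝ) (v : V → ℝ), v ≠ 0 → (G.adjMatrix ℝ).mulVec v = μ • v → lam ≤ μ)
    (Y : Finset V) (hY : ∀ x ∈ Y, ∀ y ∈ Y, ¬ G.Adj x y)
    (heq : (Y.card : ℝ) = (Fintype.card V : ℝ) / (1 - (k : ℝ) / lam)) :
    ∃ a : ℝ,
      (G.adjMatrix ℝ).mulVec ((fun x => if x ∈ Y then (1 : ℝ) else 0) - a • (fun _ : V => (1 : ℝ)))
        = lam • ((fun x => if x ∈ Y then (1 : ℝ) else 0) - a • (fun _ : V => (1 : ℝ))) := by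
  classical
  by_cases hV : IsEmpty V
  · exact ⟨0, funext fun x => hV.elim x⟩
  rw [not_isEmpty_iff] at hV
  set A : Matrix V V ℝ := G.adjMatrix ℝ with hAdef
  have hvpos : (0:ℝ) < (Fintype.card V : ℝ) := by
    exact_mod_cast Fintype.card_pos
  set vc : ℝ := (Fintype.card V : ℝ) with hvc
  set nc : ℝ := (Y.card : ℝ) with hnc
  have hlamne : lam ≠ 0 := ne_of_lt hneg
  have hden : (1 : ℝ) - (k:ℝ)/lam ≠ 0 := by
    have : (k:ℝ)/lam ≤ 0 := div_nonpos_of_nonneg_of_nonpos (by positivity) hneg.le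
    linarith
  have hkey : nc * (lam - (k:ℝ)) = lam * vc := by
    have h1 : nc * (1 - (k:ℝ)/lam) = vc := by
      rw [heq, div_mul_cancel₀ _ hden]
    have h2 : (1 - (k:ℝ)/lam) * lam = lam - k := by field_simp
    calc nc * (lam - (k:ℝ)) = nc * ((1 - (k:ℝ)/lam) * lam) := by rw [h2]
      _ = vc * lam := by rw [← mul_assoc, h1]
      _ = lam * vc := mul_comm _ _
  set a : ℝ := nc / vc with hadef
  clear_value a
  refine ⟨a, ?_⟩
  set χ : V → ℝ := fun x => if x ∈ Y then (1:ℝ) else 0 with hχ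
  set o : V → ℝ := fun _ : V => (1:ℝ) with ho
  set f : V → ℝ := χ - a • o with hf
  -- Hermitian
  have hA : A.IsHermitian := by
    show Aᴴ = A
    ext i j
    simp [A, Matrix.conjTranspose_apply, G.adj_comm]
  have hB : (A - lam • 1).IsHermitian := by
    refine hA.sub ?_
    show (lam • (1 : Matrix V V ℝ))ᴴ = _
    ext i j
    simp [Matrix.conjTranspose_apply, Matrix.one_apply, eq_comm]
  -- positive semidefinite
  have hBps : (A - lam • 1).PosSemidef := by
    apply hB.posSemidef_iff_eigenvalues_nonneg.mpr
    intro i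
    set w : V → ℝ := ⇑(hB.eigenvectorBasis i) with hw
    have hwe : (A - lam • 1) *ᵥ w = hB.eigenvalues i • w := hB.mulVec_eigenvectorBasis i
    have hwne : w ≠ 0 := by
      have h0 := hB.eigenvectorBasis.orthonormal.ne_zero i
      intro h
      apply h0
      ext x
      exact congrFun h x
    have hAw : A.mulVec w = (hB.eigenvalues i + lam) • w := by
      have h2 : (A - lam • 1) *ᵥ w = A *ᵥ w - lam • w := by
        rw [Matrix.sub_mulVec, Matrix.smul_mulVec, Matrix.one_mulVec]
      rw [h2] at hwe
      funext x
      have := congrFun hwe x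
      simp only [Pi.sub_apply, Pi.smul_apply, smul_eq_mul] at this ⊢
      linarith
    have := hlam_min _ _ hwne hAw
    simp only [Pi.zero_apply]
    linarith
  -- quadratic form computations
  have hsymm : ∀ x y : V → ℝ, x ⬝ᵥ (A *ᵥ y) = y ⬝ᵥ (A *ᵥ x) := by
    intro x y
    rw [hAdef, dotProduct_mulVec_adjMatrix, dotProduct_mulVec_adjMatrix, Finset.sum_comm]
    refine Finset.sum_congr rfl fun i _ => Finset.sum_congr rfl fun j _ => ?_
    by_cases h : G.Adj i j
    · rw [if_pos h, if_pos ((G.adj_comm i j).mp h), mul_comm]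
    · rw [if_neg h, if_neg (fun h' => h ((G.adj_comm j i).mp h'))]
  have hA1 : A *ᵥ o = fun _ => (k:ℝ) := by
    funext x
    have h := adjMatrix_mulVec_const_apply_of_regular (α := ℝ) (a := (1:ℝ)) (v := x) hreg
    rw [mul_one] at h
    exact h
  have hχχ : χ ⬝ᵥ (A *ᵥ χ) = 0 := by
    rw [hAdef, dotProduct_mulVec_adjMatrix]
    refine Finset.sum_eq_zero fun i _ => Finset.sum_eq_zero fun j _ => ?_
    by_cases h : G.Adj i j
    · simp only [if_pos h, hχ]
      by_cases hi : i ∈ Y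
      · by_cases hj : j ∈ Y
        · exact absurd h (hY i hi j hj)
        · simp [hj]
      · simp [hi]
    · simp [h]
  have hχo : χ ⬝ᵥ o = nc := by
    simp [dotProduct, hχ, ho, hnc]
  have hoo : o ⬝ᵥ o = vc := by
    simp [dotProduct, ho, hvc]
  have hχA1 : χ ⬝ᵥ (A *ᵥ o) = nc * k := by
    rw [hA1]
    simp only [dotProduct, hχ, ite_mul, one_mul, zero_mul, Finset.sum_ite_mem,
      Finset.univ_inter, Finset.sum_const, nsmul_eq_mul, hnc]
  have h1Aχ : o ⬝ᵥ (A *ᵥ χ) = nc * k := by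
    rw [hsymm]; exact hχA1
  have h1A1 : o ⬝ᵥ (A *ᵥ o) = vc * k := by
    rw [hA1]
    simp [dotProduct, ho, hvc, mul_comm]
  have hfAf : f ⬝ᵥ (A *ᵥ f) = -(a * (nc * k)) - (a * (nc * k) - a * a * (vc * k)) := by
    rw [hf]
    simp only [Matrix.mulVec_sub, Matrix.mulVec_smul, sub_dotProduct,
      dotProduct_sub, smul_dotProduct, dotProduct_smul, smul_eq_mul,
      hχχ, hχA1, h1Aχ, h1A1]
    ring
  have hff : f ⬝ᵥ f = nc - 2 * (a * nc) + a * a * vc := by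
    have hoc : o ⬝ᵥ χ = nc := by
      simp [dotProduct, ho, hχ, hnc]
    have hχχ' : χ ⬝ᵥ χ = nc := by
      simp [dotProduct, hχ, hnc, ite_and]
    rw [hf]
    simp only [sub_dotProduct, dotProduct_sub, smul_dotProduct,
      dotProduct_smul, smul_eq_mul, hχχ', hχo, hoc, hoo]
    ring
  have hquad : f ⬝ᵥ ((A - lam • 1) *ᵥ f) = 0 := by
    have hexp : (A - lam • 1) *ᵥ f = A *ᵥ f - lam • f := by
      rw [Matrix.sub_mulVec, Matrix.smul_mulVec, Matrix.one_mulVec]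
    rw [hexp, dotProduct_sub, dotProduct_smul, hfAf, hff]
    have hvne : vc ≠ 0 := ne_of_gt hvpos
    have ha' : a * vc = nc := by
      rw [hadef, div_mul_cancel₀ _ hvne]
    simp only [smul_eq_mul]
    linear_combination (a * (k:ℝ) + lam * (1 - a)) * ha' + a * hkey
  have hstar : star f = f := by
    funext x
    simp [Pi.star_apply]
  have hf0 : (A - lam • 1) *ᵥ f = 0 := by
    rw [← hBps.dotProduct_mulVec_zero_iff f, hstar]
    exact hquad
  have hfin : A *ᵥ f = lam • f := by
    have hexp : (A - lam • 1) *ᵥ f = A *ᵥ f - lam • f := by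
      rw [Matrix.sub_mulVec, Matrix.smul_mulVec, Matrix.one_mulVec]
    rw [hexp] at hf0
    exact sub_eq_zero.mp hf0
  exact hfin
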